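/- Let a ∈ ℝ, γ > 0, and define φ : ℝ \ {2a} → ℝ by φ(y) = y/2 + a − (γ²/2)/(y − 2a). Then φ preserves the probability measure dμ(x) = γ dx / (π[(x − 2a)² + γ²]): for every Borel set A ⊆ ℝ, μ(φ^{-1} A) = μ(A). -/

import Mathlib

open MeasureTheory Set

lemma half_boole_aux (t s γ π : ℝ) (hs : s ≠ 0) (hπ : π ≠ 0)
    (hp : s + t ≠ 0) (hm : s - t ≠ 0) (hsq : s ^ 2 = t ^ 2 + γ ^ 2) :
    (s - t) / s * (γ / (π * (2 * s * (s - t))))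
      + (s + t) / s * (γ / (π * (2 * s * (s + t))))
      = γ / (π * (t ^ 2 + γ ^ 2)) := by
  rw [← hsq]
  field_simp
  ring

set_option maxHeartbeats 1000000 in
theorem half_boole_preserves_cauchy (a γ : ℝ) (hγ : 0 < γ)
    (φ : ℝ → ℝ) (hφ : ∀ y, φ y = y / 2 + a - (γ ^ 2 / 2) / (y - 2 * a))
    (A : Set ℝ) (hA : MeasurableSet A) :
    ∫ x in φ ⁻¹' A, γ / (Real.pi * ((x - 2 * a) ^ 2 + γ ^ 2)) =
      ∫ x in A, γ / (Real.pi * ((x - 2 * a) ^ 2 + γ ^ 2)) := by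
  have hφf : φ = fun y => y / 2 + a - (γ ^ 2 / 2) / (y - 2 * a) := funext hφ
  subst hφf
  set b : ℝ := 2 * a with hb
  set f : ℝ → ℝ := fun x => γ / (Real.pi * ((x - b) ^ 2 + γ ^ 2)) with hfdef
  set φ : ℝ → ℝ := fun y => y / 2 + a - (γ ^ 2 / 2) / (y - b) with hφdef
  set S : ℝ → ℝ := fun x => Real.sqrt ((x - b) ^ 2 + γ ^ 2) with hSdef
  have hπ : (0:ℝ) < Real.pi := Real.pi_pos
  have hSpos : ∀ x, 0 < S x := fun x => Real.sqrt_pos.mpr (by positivity)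
  have hSsq : ∀ x, S x ^ 2 = (x - b) ^ 2 + γ ^ 2 := fun x => Real.sq_sqrt (by positivity)
  have hSgt : ∀ x, |x - b| < S x := by
    intro x
    nlinarith [hSpos x, hSsq x, sq_abs (x - b), abs_nonneg (x - b)]
  have hplus : ∀ x, 0 < S x + (x - b) := by
    intro x; have := abs_lt.mp (hSgt x); linarith [this.1]
  have hminus : ∀ x, 0 < S x - (x - b) := by
    intro x; have := abs_lt.mp (hSgt x); linarith [this.2]
  -- the two branches of the inverse
  set ψp : ℝ → ℝ := fun x => x + S x with hψp
  set ψm : ℝ → ℝ := fun x => x - S x with hψm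
  have hψp_gt : ∀ x, b < ψp x := fun x => by
    have := hplus x; simp only [hψp]; linarith
  have hψm_lt : ∀ x, ψm x < b := fun x => by
    have := hminus x; simp only [hψm]; linarith
  -- φ ∘ ψp = id and φ ∘ ψm = id
  have hφψp : ∀ x, φ (ψp x) = x := by
    intro x
    have h1 : ψp x - b ≠ 0 := ne_of_gt (by linarith [hψp_gt x])
    have key : (ψp x - b) * (S x - (x - b)) = γ ^ 2 := by
      have := hSsq x; simp only [hψp]; nlinarith
    have h2 : (γ ^ 2 / 2) / (ψp x - b) = (S x - (x - b)) / 2 := by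
      rw [div_eq_iff h1]; linear_combination -key / 2
    simp only [hφdef, hψp] at h2 ⊢
    rw [h2]
    simp only [hb]; ring
  have hφψm : ∀ x, φ (ψm x) = x := by
    intro x
    have h1 : ψm x - b ≠ 0 := ne_of_lt (by linarith [hψm_lt x])
    have key : (ψm x - b) * (S x + (x - b)) = -γ ^ 2 := by
      have := hSsq x; simp only [hψm]; nlinarith
    have h2 : (γ ^ 2 / 2) / (ψm x - b) = -(S x + (x - b)) / 2 := by
      rw [div_eq_iff h1]; linear_combination key / 2
    simp only [hφdef, hψm] at h2 ⊢
    rw [h2]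
    simp only [hb]; ring
  -- ψ ∘ φ = id on the half lines
  have hψpφ : ∀ y, b < y → ψp (φ y) = y := by
    intro y hy
    have hu : (0:ℝ) < y - b := sub_pos.mpr hy
    have hu' : y - b ≠ 0 := ne_of_gt hu
    have hc : φ y - b = (y - b) / 2 - γ ^ 2 / (2 * (y - b)) := by
      simp only [hφdef, hb]; field_simp [show y - 2 * a ≠ 0 from hu']; ring
    have h2 : y - φ y = (y - b) / 2 + γ ^ 2 / (2 * (y - b)) := by
      simp only [hφdef, hb] at hc ⊢; field_simp [show y - 2 * a ≠ 0 from hu']; ring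
    have h3 : (φ y - b) ^ 2 + γ ^ 2 = (y - φ y) ^ 2 := by
      rw [hc, h2]; field_simp; ring
    have h4 : 0 ≤ y - φ y := by rw [h2]; positivity
    have h5 : S (φ y) = y - φ y := by
      simp only [hSdef]; rw [h3, Real.sqrt_sq h4]
    simp only [hψp]; rw [h5]; ring
  have hψmφ : ∀ y, y < b → ψm (φ y) = y := by
    intro y hy
    have hu : y - b < 0 := sub_neg.mpr hy
    have hu' : y - b ≠ 0 := ne_of_lt hu
    have h2 : φ y - y = -((y - b) / 2 + γ ^ 2 / (2 * (y - b))) := by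
      simp only [hφdef, hb]; field_simp [show y - 2 * a ≠ 0 from hu']; ring
    have h3 : (φ y - b) ^ 2 + γ ^ 2 = (φ y - y) ^ 2 := by
      have hc : φ y - b = (y - b) / 2 - γ ^ 2 / (2 * (y - b)) := by
        simp only [hφdef, hb]; field_simp [show y - 2 * a ≠ 0 from hu']; ring
      rw [hc, h2]; field_simp; ring
    have h4 : 0 ≤ φ y - y := by
      rw [h2]
      have t1 : (y - b) / 2 < 0 := by linarith
      have t2 : γ ^ 2 / (2 * (y - b)) < 0 :=
        div_neg_of_pos_of_neg (by positivity) (by linarith)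
      linarith
    have h5 : S (φ y) = φ y - y := by
      simp only [hSdef]; rw [h3, Real.sqrt_sq h4]
    simp only [hψm]; rw [h5]; ring
  -- preimage decomposition
  have hIp : φ ⁻¹' A ∩ Ioi b = ψp '' A := by
    ext x
    constructor
    · rintro ⟨hxA, hxb⟩
      exact ⟨φ x, hxA, hψpφ x hxb⟩
    · rintro ⟨t, ht, rfl⟩
      exact ⟨by simpa [hφψp t] using ht, hψp_gt t⟩
  have hIm : φ ⁻¹' A ∩ Iio b = ψm '' A := by
    ext x
    constructor
    · rintro ⟨hxA, hxb⟩
      exact ⟨φ x, hxA, hψmφ x hxb⟩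
    · rintro ⟨t, ht, rfl⟩
      exact ⟨by simpa [hφψm t] using ht, hψm_lt t⟩
  -- derivatives
  have hSder : ∀ x, HasDerivAt S ((x - b) / S x) x := by
    intro x
    have h0 : HasDerivAt (fun x : ℝ => (x - b) ^ 2 + γ ^ 2) (2 * (x - b)) x := by
      have := (((hasDerivAt_id x).sub_const b).pow 2).add_const (γ ^ 2)
      simpa using this
    have h1 := h0.sqrt (by positivity)
    convert h1 using 1
    have hSx : S x = Real.sqrt ((x - b) ^ 2 + γ ^ 2) := rfl
    rw [← hSx]
    field_simp
  have hψpder : ∀ x, HasDerivAt ψp (1 + (x - b) / S x) x := by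
    intro x
    exact (hasDerivAt_id x).add (hSder x)
  have hψmder : ∀ x, HasDerivAt ψm (1 - (x - b) / S x) x := by
    intro x
    exact (hasDerivAt_id x).sub (hSder x)
  -- measurability
  have hφm : Measurable φ := by
    simp only [hφdef]
    fun_prop
  have hAp : MeasurableSet (φ ⁻¹' A ∩ Ioi b) := (hφm hA).inter measurableSet_Ioi
  have hAm : MeasurableSet (φ ⁻¹' A ∩ Iio b) := (hφm hA).inter measurableSet_Iio
  -- integrability of the Cauchy density
  have hfint : Integrable f := by
    have h0 : Integrable (fun x : ℝ => (1 + x ^ 2)⁻¹) := integrable_inv_one_add_sq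
    have h1 := (h0.comp_div (R := γ) (ne_of_gt hγ))
    have h2 := (h1.const_mul (Real.pi * γ)⁻¹).comp_sub_right b
    apply h2.congr
    filter_upwards with x
    simp only [hfdef]
    have hd1 : (x - b) ^ 2 + γ ^ 2 > 0 := by positivity
    field_simp
    ring
  -- change of variables on each branch
  have hinjp : InjOn ψp A := (Function.LeftInverse.injective hφψp).injOn
  have hinjm : InjOn ψm A := (Function.LeftInverse.injective hφψm).injOn
  have hderp : ∀ x ∈ A, HasDerivWithinAt ψp (1 + (x - b) / S x) A x :=
    fun x _ => (hψpder x).hasDerivWithinAt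
  have hderm : ∀ x ∈ A, HasDerivWithinAt ψm (1 - (x - b) / S x) A x :=
    fun x _ => (hψmder x).hasDerivWithinAt
  have hchp : ∫ x in ψp '' A, f x
      = ∫ x in A, |1 + (x - b) / S x| • f (ψp x) :=
    integral_image_eq_integral_abs_deriv_smul hA hderp hinjp f
  have hchm : ∫ x in ψm '' A, f x
      = ∫ x in A, |1 - (x - b) / S x| • f (ψm x) :=
    integral_image_eq_integral_abs_deriv_smul hA hderm hinjm f
  have hintp : IntegrableOn (fun x => |1 + (x - b) / S x| • f (ψp x)) A :=
    (integrableOn_image_iff_integrableOn_abs_deriv_smul hA hderp hinjp f).mp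
      hfint.integrableOn
  have hintm : IntegrableOn (fun x => |1 - (x - b) / S x| • f (ψm x)) A :=
    (integrableOn_image_iff_integrableOn_abs_deriv_smul hA hderm hinjm f).mp
      hfint.integrableOn
  -- pointwise density identity
  have hkey : ∀ x, |1 - (x - b) / S x| • f (ψm x) + |1 + (x - b) / S x| • f (ψp x) = f x := by
    intro x
    have hs := hSpos x
    have hs' : S x ≠ 0 := ne_of_gt hs
    have hp := hplus x
    have hm := hminus x
    have hd1 : (x - b) / S x < 1 := (div_lt_one hs).mpr (by linarith)
    have hd2 : (-1 : ℝ) < (x - b) / S x := (lt_div_iff₀ hs).mpr (by linarith)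
    have habs1 : |1 - (x - b) / S x| = (S x - (x - b)) / S x := by
      rw [abs_of_pos (by linarith)]
      field_simp
    have habs2 : |1 + (x - b) / S x| = (S x + (x - b)) / S x := by
      rw [abs_of_pos (by linarith)]
      field_simp
    have e1 : (ψp x - b) ^ 2 + γ ^ 2 = 2 * S x * (S x + (x - b)) := by
      have := hSsq x; simp only [hψp]; nlinarith
    have e2 : (ψm x - b) ^ 2 + γ ^ 2 = 2 * S x * (S x - (x - b)) := by
      have := hSsq x; simp only [hψm]; nlinarith
    have hfp : f (ψp x) = γ / (Real.pi * (2 * S x * (S x + (x - b)))) := by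
      simp only [hfdef]; rw [e1]
    have hfm : f (ψm x) = γ / (Real.pi * (2 * S x * (S x - (x - b)))) := by
      simp only [hfdef]; rw [e2]
    rw [habs1, habs2, hfp, hfm, smul_eq_mul, smul_eq_mul]
    have hgoal := half_boole_aux (x - b) (S x) γ Real.pi hs' (ne_of_gt hπ)
      (ne_of_gt (by linarith)) (ne_of_gt (by linarith)) (hSsq x)
    simpa only [hfdef] using hgoal
  -- main computation
  have hsplit : φ ⁻¹' A =ᵐ[volume] ((φ ⁻¹' A ∩ Iio b) ∪ (φ ⁻¹' A ∩ Ioi b) : Set ℝ) := by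
    have h1 : (φ ⁻¹' A ∩ Iio b) ∪ (φ ⁻¹' A ∩ Ioi b) = φ ⁻¹' A \ {b} := by
      rw [← inter_union_distrib_left, Iio_union_Ioi]
      rfl
    rw [h1]
    have h2 : (volume : Measure ℝ) (φ ⁻¹' A ∩ ({b} : Set ℝ)) = 0 :=
      measure_mono_null inter_subset_right Real.volume_singleton
    exact (diff_ae_eq_self.mpr h2).symm
  calc ∫ x in φ ⁻¹' A, f x
      = ∫ x in (φ ⁻¹' A ∩ Iio b) ∪ (φ ⁻¹' A ∩ Ioi b), f x :=
        setIntegral_congr_set hsplit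
    _ = (∫ x in φ ⁻¹' A ∩ Iio b, f x) + ∫ x in φ ⁻¹' A ∩ Ioi b, f x := by
        apply setIntegral_union ?_ hAp hfint.integrableOn hfint.integrableOn
        exact Disjoint.mono inter_subset_right inter_subset_right
          ((Iio_disjoint_Ici le_rfl).mono_right Ioi_subset_Ici_self)
    _ = (∫ x in A, |1 - (x - b) / S x| • f (ψm x))
        + ∫ x in A, |1 + (x - b) / S x| • f (ψp x) := by
        rw [hIm, hIp, hchm, hchp]
    _ = ∫ x in A, (|1 - (x - b) / S x| • f (ψm x) + |1 + (x - b) / S x| • f (ψp x)) :=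
        (integral_add hintm hintp).symm
    _ = ∫ x in A, f x := by
        apply integral_congr_ae
        filter_upwards with x using hkey x
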